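/- The Majumdar–Dhar map σ_G is injective: if η¹ and η² are distinct allowed stable configurations on a finite connected multigraph G with sink s, then the spanning trees σ_G(η¹) and σ_G(η²) constructed from the Burning Algorithm are distinct. -/
import Mathlib


open Set

noncomputable section

/-- Number of oriented edges with tail `x` (the degree of `x` in the multigraph). -/
def degD {Vp D : Type*} (tl : D → Vp) (x : Vp) : ℕ := {e : D | tl e = x}.ncard

/-- Unburnt sets of the Burning Algorithm: `U 0 = V⁺ \ {s}` and
`U (n+1) = {v ∈ U n : η v < deg_{U n} v}`. -/
def Up {Vp D : Type*} (tl hd : D → Vp) (s : Vp) (η : Vp → ℕ) : ℕ → Set Vp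
  | 0 => {v | v ≠ s}
  | n + 1 => {v ∈ Up tl hd s η n |
      η v < Set.ncard {e : D | tl e = v ∧ hd e ∈ Up tl hd s η n}}

/-- Burning sets: `B 0 = {s}` and `B (n+1) = {v ∈ U n : η v ≥ deg_{U n} v}`. -/
def Bp {Vp D : Type*} (tl hd : D → Vp) (s : Vp) (η : Vp → ℕ) : ℕ → Set Vp
  | 0 => {s}
  | n + 1 => {v ∈ Up tl hd s η n |
      Set.ncard {e : D | tl e = v ∧ hd e ∈ Up tl hd s η n} ≤ η v}

/-- `P_x`: the set of oriented edges from `x` to the set burning at time `i − 1`. -/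
def PsetB {Vp D : Type*} (tl hd : D → Vp) (s : Vp) (η : Vp → ℕ) (i : ℕ) (x : Vp) :
    Set D :=
  {e : D | tl e = x ∧ hd e ∈ Bp tl hd s η (i - 1)}

/-- `n_x`: the number of edges from `x` to vertices burnt strictly before time `i`. -/
def nBefore {Vp D : Type*} (tl hd : D → Vp) (s : Vp) (η : Vp → ℕ) (i : ℕ) (x : Vp) :
    ℕ :=
  Set.ncard {e : D | tl e = x ∧ hd e ∉ Up tl hd s η (i - 1)}

/-- Stability of a configuration. -/
def StableD {Vp D : Type*} (tl : D → Vp) (s : Vp) (η : Vp → ℕ) : Prop :=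
  ∀ v : Vp, v ≠ s → η v < degD tl v

/-- `η` is allowed: no nonempty set of non-sink vertices is a forbidden
subconfiguration. -/
def AllowedD {Vp D : Type*} (tl hd : D → Vp) (s : Vp) (η : Vp → ℕ) : Prop :=
  ∀ F : Set Vp, F.Nonempty → (∀ v ∈ F, v ≠ s) →
    ¬ (∀ v ∈ F, η v < Set.ncard {e : D | tl e = v ∧ hd e ∈ F})

/-- `t` is the spanning tree `σ_G(η)` of the Majumdar–Dhar construction: for every
vertex `x` burning at time `i ≥ 1`, the tree edge `t x` belongs to `P_x` (it points
to a vertex burning at time `i − 1`) and is the edge `α_{P_x,K_x}⁻¹(η x)`, i.e.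
`α_{P_x,K_x}(t x) = η x` where `K_x` starts at `deg_G x − n_x`. -/
def IsMDTree {Vp D : Type*} (tl hd : D → Vp) (s : Vp)
    (α : Vp → Set D → ℕ → D → ℕ) (η : Vp → ℕ)
    (t : {x : Vp // x ≠ s} → D) : Prop :=
  ∀ i : ℕ, 1 ≤ i → ∀ x : {x : Vp // x ≠ s}, x.val ∈ Bp tl hd s η i →
    t x ∈ PsetB tl hd s η i x.val ∧
    α x.val (PsetB tl hd s η i x.val)
      (degD tl x.val - nBefore tl hd s η i x.val) (t x) = η x.val

section Aux

variable {Vp D : Type*} (tl hd : D → Vp) (s : Vp) (η : Vp → ℕ)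

lemma up_succ_subset (n : ℕ) : Up tl hd s η (n + 1) ⊆ Up tl hd s η n :=
  fun _ hv => hv.1

lemma up_subset {m n : ℕ} (h : m ≤ n) : Up tl hd s η n ⊆ Up tl hd s η m := by
  induction n with
  | zero => simp_all
  | succ k ih =>
    rcases Nat.lt_or_ge m (k + 1) with h' | h'
    · exact fun v hv => ih (by omega) (up_succ_subset tl hd s η k hv)
    · have : m = k + 1 := le_antisymm h h'
      subst this; exact fun _ h => h

lemma s_not_up (n : ℕ) : s ∉ Up tl hd s η n :=
  fun h => (up_subset tl hd s η (Nat.zero_le n) h : s ≠ s) rfl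

lemma bp_eq_diff (n : ℕ) :
    Bp tl hd s η (n + 1) = Up tl hd s η n \ Up tl hd s η (n + 1) := by
  ext v
  simp only [Bp, Up, Set.mem_setOf_eq, Set.mem_diff]
  constructor
  · rintro ⟨h1, h2⟩
    exact ⟨h1, fun h => absurd h.2 (by omega)⟩
  · rintro ⟨h1, h2⟩
    exact ⟨h1, le_of_not_gt fun hlt => h2 ⟨h1, hlt⟩⟩

lemma bp_disj_up (n : ℕ) : ∀ v ∈ Bp tl hd s η n, v ∉ Up tl hd s η n := by
  cases n with
  | zero =>
    intro v hv
    rw [show v = s from hv]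
    exact s_not_up tl hd s η 0
  | succ k =>
    rw [bp_eq_diff]
    exact fun v hv => hv.2

lemma bp_subset_up (n : ℕ) : Bp tl hd s η (n + 1) ⊆ Up tl hd s η n :=
  fun _ hv => hv.1

lemma up_eventually_empty [Fintype Vp] (ha : AllowedD tl hd s η) :
    ∃ N, Up tl hd s η N = ∅ := by
  by_contra h
  push_neg at h
  have hne : ∀ n, (Up tl hd s η n).Nonempty :=
    fun n => h n
  have hstrict : ∀ n, Up tl hd s η (n + 1) ⊂ Up tl hd s η n := by
    intro n
    refine HasSubset.Subset.ssubset_of_ne (up_succ_subset tl hd s η n) fun heq => ?_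
    refine ha (Up tl hd s η n) (hne n)
      (fun v hv => up_subset tl hd s η (Nat.zero_le n) hv) fun v hv => ?_
    have : v ∈ Up tl hd s η (n + 1) := heq ▸ hv
    exact this.2
  have hcard : ∀ n, (Up tl hd s η n).ncard + n ≤ (Up tl hd s η 0).ncard := by
    intro n
    induction n with
    | zero => omega
    | succ k ih =>
      have := Set.ncard_lt_ncard (hstrict k) (Set.toFinite _)
      omega
  have h1 := hcard ((Up tl hd s η 0).ncard + 1)
  have h2 : 0 < (Up tl hd s η ((Up tl hd s η 0).ncard + 1)).ncard :=
    (Set.ncard_pos (Set.toFinite _)).2 (hne _)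
  omega

lemma exists_burn_time [Fintype Vp] (ha : AllowedD tl hd s η) {x : Vp} (hx : x ≠ s) :
    ∃ j, x ∈ Bp tl hd s η (j + 1) := by
  obtain ⟨N, hN⟩ := up_eventually_empty tl hd s η ha
  by_contra h
  push_neg at h
  have hall : ∀ n, x ∈ Up tl hd s η n := by
    intro n
    induction n with
    | zero => exact hx
    | succ k ih =>
      by_contra hk
      exact h k ((bp_eq_diff tl hd s η k).symm ▸ (⟨ih, hk⟩ : _))
  have := hall N
  rw [hN] at this
  exact this

/-- The key "no swap" lemma: if the burning processes of `η₁` and `η₂` agree up to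
time `n` and share the same tree `t`, then a vertex cannot burn at time `n+1` in
process 1 while staying unburnt in process 2. -/
lemma no_swap {Vp D : Type*} [Fintype Vp] [Fintype D] (tl hd : D → Vp) (s : Vp)
    (α : Vp → Set D → ℕ → D → ℕ) (η₁ η₂ : Vp → ℕ)
    (h₂a : AllowedD tl hd s η₂)
    (t : {x : Vp // x ≠ s} → D)
    (ht₁ : IsMDTree tl hd s α η₁ t) (ht₂ : IsMDTree tl hd s α η₂ t)
    {n : ℕ} (hUp : ∀ m ≤ n, Up tl hd s η₁ m = Up tl hd s η₂ m)
    {x : Vp} (hxs : x ≠ s) (hx : x ∈ Up tl hd s η₁ n)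
    (h1 : x ∉ Up tl hd s η₁ (n + 1)) (h2 : x ∈ Up tl hd s η₂ (n + 1)) : False := by
  have hb1 : x ∈ Bp tl hd s η₁ (n + 1) := by
    rw [bp_eq_diff]; exact ⟨hx, h1⟩
  obtain ⟨he1, -⟩ := ht₁ (n + 1) (by omega) ⟨x, hxs⟩ hb1
  obtain ⟨j, hj⟩ := exists_burn_time tl hd s η₂ h₂a hxs
  have hjn : n + 1 ≤ j := by
    by_contra hc
    push_neg at hc
    exact bp_disj_up tl hd s η₂ (j + 1) x hj
      (up_subset tl hd s η₂ (by omega) h2)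
  obtain ⟨he2, -⟩ := ht₂ (j + 1) (by omega) ⟨x, hxs⟩ hj
  have hbeq : Bp tl hd s η₁ n = Bp tl hd s η₂ n := by
    cases n with
    | zero => rfl
    | succ k => rw [bp_eq_diff, bp_eq_diff, hUp k (by omega), hUp (k + 1) le_rfl]
  have hmem1 : hd (t ⟨x, hxs⟩) ∈ Bp tl hd s η₂ n := by
    have := he1.2
    simpa [PsetB, hbeq] using he1.2
  have hmem2 : hd (t ⟨x, hxs⟩) ∈ Up tl hd s η₂ n := by
    have h' : hd (t ⟨x, hxs⟩) ∈ Bp tl hd s η₂ j := by simpa [PsetB] using he2.2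
    obtain ⟨k, rfl⟩ : ∃ k, j = k + 1 := ⟨j - 1, by omega⟩
    exact up_subset tl hd s η₂ (by omega) (bp_subset_up tl hd s η₂ k h')
  exact bp_disj_up tl hd s η₂ n _ hmem1 hmem2

lemma key_agree {Vp D : Type*} [Fintype Vp] [Fintype D] (tl hd : D → Vp) (s : Vp)
    (α : Vp → Set D → ℕ → D → ℕ) (η₁ η₂ : Vp → ℕ)
    (h₁a : AllowedD tl hd s η₁) (h₂a : AllowedD tl hd s η₂)
    (t : {x : Vp // x ≠ s} → D)
    (ht₁ : IsMDTree tl hd s α η₁ t) (ht₂ : IsMDTree tl hd s α η₂ t) :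
    ∀ n, (∀ m ≤ n, Up tl hd s η₁ m = Up tl hd s η₂ m) ∧
      (∀ x, x ∉ Up tl hd s η₁ n → x ≠ s → η₁ x = η₂ x) := by
  intro n
  induction n with
  | zero =>
    refine ⟨fun m hm => by interval_cases m; rfl, fun x hx hxs => ?_⟩
    exact absurd hxs (by simpa [Up] using hx)
  | succ k ih =>
    obtain ⟨ihU, ihη⟩ := ih
    have hUk : Up tl hd s η₁ k = Up tl hd s η₂ k := ihU k le_rfl
    have hUsucc : Up tl hd s η₁ (k + 1) = Up tl hd s η₂ (k + 1) := by
      ext v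
      constructor
      · intro hv
        by_contra hv2
        have hvs : v ≠ s := up_subset tl hd s η₁ (Nat.zero_le _) hv
        exact no_swap tl hd s α η₂ η₁ h₁a t ht₂ ht₁
          (fun m hm => (ihU m hm).symm) hvs (hUk ▸ hv.1) hv2 hv
      · intro hv
        by_contra hv2
        have hvs : v ≠ s := up_subset tl hd s η₂ (Nat.zero_le _) hv
        exact no_swap tl hd s α η₁ η₂ h₂a t ht₁ ht₂
          (fun m hm => ihU m hm) hvs (hUk.symm ▸ hv.1) hv2 hv
    refine ⟨fun m hm => ?_, fun x hx hxs => ?_⟩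
    · rcases Nat.lt_or_ge m (k + 1) with h' | h'
      · exact ihU m (by omega)
      · have : m = k + 1 := le_antisymm hm h'
        subst this; exact hUsucc
    · by_cases hxk : x ∈ Up tl hd s η₁ k
      · -- x burns at time k+1 in both processes
        have hb1 : x ∈ Bp tl hd s η₁ (k + 1) := by
          rw [bp_eq_diff]; exact ⟨hxk, hx⟩
        have hb2 : x ∈ Bp tl hd s η₂ (k + 1) := by
          rw [bp_eq_diff]
          exact ⟨hUk ▸ hxk, fun h => hx (hUsucc.symm ▸ h)⟩
        obtain ⟨-, hα1⟩ := ht₁ (k + 1) (by omega) ⟨x, hxs⟩ hb1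
        obtain ⟨-, hα2⟩ := ht₂ (k + 1) (by omega) ⟨x, hxs⟩ hb2
        have hbeq : Bp tl hd s η₁ k = Bp tl hd s η₂ k := by
          cases k with
          | zero => rfl
          | succ m => rw [bp_eq_diff, bp_eq_diff, ihU m (by omega), ihU (m + 1) le_rfl]
        have hP : PsetB tl hd s η₁ (k + 1) x = PsetB tl hd s η₂ (k + 1) x := by
          simp [PsetB, hbeq]
        have hn : nBefore tl hd s η₁ (k + 1) x = nBefore tl hd s η₂ (k + 1) x := by
          simp [nBefore, hUk]
        rw [hP, hn] at hα1
        exact hα1.symm.trans hα2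
      · exact ihη x hxk hxs

end Aux

/-- the Majumdar–Dhar map `σ_G` is injective: distinct allowed stable
configurations `η₁ ≠ η₂` on a finite connected multigraph `G` with sink `s` yield
distinct spanning trees `σ_G(η₁) ≠ σ_G(η₂)`.  The multigraph is encoded by its set
`D` of oriented edges with tail/head maps `tl`, `hd` and reversal `rev`; `α` is the
fixed family of bijections `α_{P,K} : P → K` used in the construction. -/
theorem stmt_7 {Vp D : Type*} [Fintype Vp] [Fintype D]
    (tl hd : D → Vp) (rev : D → D)
    (hrev : ∀ e : D, tl (rev e) = hd e ∧ hd (rev e) = tl e ∧ rev (rev e) = e)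
    (hloop : ∀ e : D, tl e ≠ hd e)
    (s : Vp)
    (hconn : ∀ v : Vp,
      Relation.ReflTransGen (fun u w => ∃ e : D, tl e = u ∧ hd e = w) v s)
    (α : Vp → Set D → ℕ → D → ℕ)
    (hα : ∀ (x : Vp) (P : Set D) (j : ℕ), P.Nonempty → (∀ e ∈ P, tl e = x) →
      Set.BijOn (α x P j) P (Set.Ico j (j + P.ncard)))
    (η₁ η₂ : Vp → ℕ)
    (h₁s : StableD tl s η₁) (h₁a : AllowedD tl hd s η₁)
    (h₂s : StableD tl s η₂) (h₂a : AllowedD tl hd s η₂)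
    (hne : ∃ x : Vp, x ≠ s ∧ η₁ x ≠ η₂ x)
    (t₁ t₂ : {x : Vp // x ≠ s} → D)
    (ht₁ : IsMDTree tl hd s α η₁ t₁) (ht₂ : IsMDTree tl hd s α η₂ t₂) :
    t₁ ≠ t₂ := by
  intro heq
  subst heq
  obtain ⟨x, hxs, hxne⟩ := hne
  obtain ⟨N, hN⟩ := up_eventually_empty tl hd s η₁ h₁a
  have := (key_agree tl hd s α η₁ η₂ h₁a h₂a t₁ ht₁ ht₂ N).2 x
    (by rw [hN]; exact id) hxs
  exact hxne this
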